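/- With Λ(m,p) and Λ^(α)(m,p) as defined, for every common divisor α of m and p: |Λ^(α)(m,p)| = Σ_β μ(β/α) · C((p+m)/β − 1, m/β − 1), where the sum is over all common divisors β of m and p that are multiples of α, and μ is the Möbius function. -/

import Mathlib

/-- The set `Λ(m,p)`. -/
def Lambda (m p : ℕ) : Set (ℤ → ℤ) :=
  {l | l 1 = 0 ∧ (∀ i : ℤ, l i ≤ l (i + 1)) ∧ ∀ i : ℤ, l (i + (m : ℤ)) = l i + (p : ℤ)}

/-- `Λ^(α)(m,p)`. -/
def LambdaExact (m p α : ℕ) : Set (ℤ → ℤ) :=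
  {l | l ∈ Lambda (m / α) (p / α) ∧
    ∀ α' : ℕ, α' ∣ m → α' ∣ p → α ∣ α' → α < α' → l ∉ Lambda (m / α') (p / α')}

namespace LambdaAux

/-- periodic extension of `v`, as integers -/
def wext (m : ℕ) (v : Fin m → ℕ) (i : ℕ) : ℤ :=
  if h : i % m < m then (v ⟨i % m, h⟩ : ℤ) else 0

/-- partial sums -/
def S (m : ℕ) (v : Fin m → ℕ) (k : ℕ) : ℤ := ∑ i ∈ Finset.range k, wext m v i

def fromV (m p : ℕ) (v : Fin m → ℕ) : ℤ → ℤ :=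
  fun j => p * ((j - 1) / m) + S m v ((j - 1) % m).toNat

def toV (m : ℕ) (l : ℤ → ℤ) : Fin m → ℕ :=
  fun i => (l ((i : ℤ) + 2) - l ((i : ℤ) + 1)).toNat

lemma wext_lt {m : ℕ} (v : Fin m → ℕ) {i : ℕ} (h : i < m) : wext m v i = v ⟨i, h⟩ := by
  have : i % m = i := Nat.mod_eq_of_lt h
  simp only [wext, this]
  rw [dif_pos h]

lemma wext_nonneg {m : ℕ} (v : Fin m → ℕ) (i : ℕ) : 0 ≤ wext m v i := by
  unfold wext; split <;> positivity

lemma S_top {m : ℕ} (v : Fin m → ℕ) : S m v m = ∑ i, (v i : ℤ) := by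
  rw [S, ← Fin.sum_univ_eq_sum_range (fun i => wext m v i) m]
  exact Finset.sum_congr rfl fun i _ => by rw [wext_lt v i.isLt]

lemma S_nonneg {m : ℕ} (v : Fin m → ℕ) (k : ℕ) : 0 ≤ S m v k :=
  Finset.sum_nonneg fun i _ => wext_nonneg v i

lemma S_mono {m : ℕ} (v : Fin m → ℕ) {k k' : ℕ} (h : k ≤ k') : S m v k ≤ S m v k' := by
  rw [S, S]
  exact Finset.sum_le_sum_of_subset_of_nonneg (Finset.range_subset_range.2 h)
    (fun i _ _ => wext_nonneg v i)

lemma fromV_succ {m p : ℕ} (v : Fin m → ℕ) (hm : 0 < m) (hsum : ∑ i, v i = p)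
    {t : ℕ} (ht : t ≤ m) : fromV m p v ((t : ℤ) + 1) = S m v t := by
  unfold fromV
  simp only [add_sub_cancel_right]
  rcases lt_or_eq_of_le ht with h | rfl
  · rw [Int.ediv_eq_zero_of_lt (by positivity) (by exact_mod_cast h),
      Int.emod_eq_of_lt (by positivity) (by exact_mod_cast h)]
    simp
  · rw [Int.ediv_self (by exact_mod_cast hm.ne'), Int.emod_self]
    simp only [Int.toNat_zero, mul_one]
    rw [show S t v 0 = 0 from rfl, S_top, add_zero, ← Nat.cast_sum, hsum]

lemma fromV_one {m p : ℕ} (v : Fin m → ℕ) : fromV m p v 1 = 0 := by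
  unfold fromV; norm_num; rfl

lemma fromV_period {m p : ℕ} (v : Fin m → ℕ) (hm : 0 < m) (i : ℤ) :
    fromV m p v (i + (m : ℤ)) = fromV m p v i + (p : ℤ) := by
  have hm' : (m : ℤ) ≠ 0 := by exact_mod_cast hm.ne'
  unfold fromV
  have e : i + (m : ℤ) - 1 = (i - 1) + 1 * m := by ring
  rw [e, Int.add_mul_ediv_right _ _ hm', Int.add_mul_emod_self_right]
  ring

lemma fromV_step {m p : ℕ} (v : Fin m → ℕ) (hm : 0 < m) (hsum : ∑ i, v i = p) (i : ℤ) :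
    fromV m p v i ≤ fromV m p v (i + 1) := by
  have hm' : (m : ℤ) ≠ 0 := by exact_mod_cast hm.ne'
  have hmpos : (0 : ℤ) < m := by exact_mod_cast hm
  set k := i - 1 with hk
  have hr0 : 0 ≤ k % m := Int.emod_nonneg k hm'
  have hrm : k % m < m := Int.emod_lt_of_pos k hmpos
  have hdm : k % m + m * (k / m) = k := Int.emod_add_mul_ediv k m
  have e1 : i + 1 - 1 = k + 1 := by omega
  by_cases h : k % m + 1 < m
  · have h2 : (k + 1) / m = k / m ∧ (k + 1) % m = k % m + 1 :=
      (Int.ediv_emod_unique hmpos).2 ⟨by linarith, by omega, h⟩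
    unfold fromV
    rw [e1, h2.1, h2.2, ← hk]
    have e2 : (k % m + 1).toNat = (k % m).toNat + 1 := by omega
    rw [e2, S, S, Finset.sum_range_succ]
    have := wext_nonneg v (k % m).toNat
    linarith
  · have hreq : k % m = m - 1 := by omega
    have h2 : (k + 1) / m = k / m + 1 ∧ (k + 1) % m = 0 :=
      (Int.ediv_emod_unique hmpos).2 ⟨by push_cast; linarith, le_refl _, hmpos⟩
    unfold fromV
    rw [e1, h2.1, h2.2, ← hk]
    have e3 : ((0:ℤ)).toNat = 0 := rfl
    rw [e3]
    have hS0 : S m v 0 = 0 := rfl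
    rw [hS0]
    have hle : S m v (k % m).toNat ≤ S m v m := S_mono v (by omega)
    have hSm : S m v m = (p : ℤ) := by rw [S_top, ← Nat.cast_sum, hsum]
    rw [hSm] at hle
    linarith

lemma fromV_mem {m p : ℕ} (v : Fin m → ℕ) (hm : 0 < m) (hsum : ∑ i, v i = p) :
    fromV m p v ∈ Lambda m p :=
  ⟨fromV_one v, fromV_step v hm hsum, fromV_period v hm⟩

lemma lambda_mono {m p : ℕ} {l : ℤ → ℤ} (hl : l ∈ Lambda m p) : Monotone l :=
  monotone_int_of_le_succ hl.2.1

lemma zper {l : ℤ → ℤ} {q d : ℤ} (h : ∀ i, l (i + q) = l i + d) (a : ℤ) :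
    ∀ i, l (i + q * a) = l i + d * a := by
  induction a using Int.induction_on with
  | zero => simp
  | succ n ih =>
    intro i
    have e : i + q * ((n : ℤ) + 1) = (i + q * n) + q := by ring
    rw [e, h, ih]; ring
  | pred n ih =>
    intro i
    have key := h (i + q * (-(n : ℤ) - 1))
    have e : i + q * (-(n : ℤ) - 1) + q = i + q * (-(n : ℤ)) := by ring
    rw [e, ih] at key
    have : l (i + q * (-(n : ℤ) - 1)) = l i + d * (-(n : ℤ)) - d := by linarith
    rw [this]; ring

lemma per_comb {l : ℤ → ℤ} {q1 d1 q2 d2 : ℤ} (h1 : ∀ i, l (i + q1) = l i + d1)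
    (h2 : ∀ i, l (i + q2) = l i + d2) (a b : ℤ) :
    ∀ i, l (i + (q1 * a + q2 * b)) = l i + (d1 * a + d2 * b) := by
  intro i
  have e : i + (q1 * a + q2 * b) = (i + q1 * a) + q2 * b := by ring
  rw [e, zper h2 b, zper h1 a]; ring

lemma toV_sum {m p : ℕ} {l : ℤ → ℤ} (hl : l ∈ Lambda m p) : ∑ i, toV m l i = p := by
  have hmono := lambda_mono hl
  have key : ∀ i : Fin m, ((toV m l i : ℤ)) = l ((i : ℤ) + 2) - l ((i : ℤ) + 1) := by
    intro i
    exact Int.toNat_of_nonneg (by have := hmono (show (i:ℤ)+1 ≤ (i:ℤ)+2 by omega); linarith)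
  have : ((∑ i, toV m l i : ℕ) : ℤ) = (p : ℤ) := by
    push_cast
    rw [Finset.sum_congr rfl fun i _ => key i]
    have e : ∀ i : Fin m, l ((i : ℤ) + 2) - l ((i : ℤ) + 1)
        = (fun t : ℕ => l ((t : ℤ) + 1)) ((i : ℕ) + 1) - (fun t : ℕ => l ((t : ℤ) + 1)) (i : ℕ) := by
      intro i; simp only []; push_cast; ring_nf
    rw [Finset.sum_congr rfl fun i _ => e i,
      Fin.sum_univ_eq_sum_range (fun t => (fun t : ℕ => l ((t : ℤ) + 1)) (t + 1) - (fun t : ℕ => l ((t : ℤ) + 1)) t) m,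
      Finset.sum_range_sub (fun t : ℕ => l ((t : ℤ) + 1))]
    simp only [Nat.cast_zero, zero_add, hl.1]
    have := hl.2.2 1
    rw [hl.1] at this
    rw [show ((m : ℤ) + 1) = 1 + (m : ℤ) by ring, this]
    ring
  exact_mod_cast this

lemma toV_fromV {m p : ℕ} (v : Fin m → ℕ) (hm : 0 < m) (hsum : ∑ i, v i = p) :
    toV m (fromV m p v) = v := by
  funext i
  unfold toV
  have h1 : fromV m p v ((i : ℤ) + 1) = S m v i := fromV_succ v hm hsum (le_of_lt i.isLt)
  have h2 : fromV m p v ((i : ℤ) + 2) = S m v ((i : ℕ) + 1) := by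
    have e2 : ((i : ℤ)) + 2 = ((((i : ℕ) + 1 : ℕ)) : ℤ) + 1 := by push_cast; ring
    rw [e2]; exact fromV_succ v hm hsum i.isLt
  rw [h1, h2, S, S, Finset.sum_range_succ, add_sub_cancel_left, wext_lt v i.isLt]
  simp

lemma fromV_toV {m p : ℕ} {l : ℤ → ℤ} (hm : 0 < m) (hl : l ∈ Lambda m p) :
    fromV m p (toV m l) = l := by
  have hmono := lambda_mono hl
  have hS : ∀ t : ℕ, t < m → S m (toV m l) t = l ((t : ℤ) + 1) := by
    intro t
    induction t with
    | zero => intro _; rw [show S m (toV m l) 0 = 0 from rfl]; simp [hl.1]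
    | succ t ih =>
      intro ht
      have ht' : t < m := by omega
      rw [S, Finset.sum_range_succ, ← S, ih ht', wext_lt _ ht']
      have : ((toV m l ⟨t, ht'⟩ : ℤ)) = l ((t : ℤ) + 2) - l ((t : ℤ) + 1) := by
        unfold toV
        exact Int.toNat_of_nonneg (by have := hmono (show (t:ℤ)+1 ≤ (t:ℤ)+2 by omega); linarith)
      rw [this]
      push_cast
      ring
  funext j
  have hm' : (m : ℤ) ≠ 0 := by exact_mod_cast hm.ne'
  have hmpos : (0 : ℤ) < m := by exact_mod_cast hm
  set k := j - 1 with hk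
  have hr0 : 0 ≤ k % m := Int.emod_nonneg k hm'
  have hrm : k % m < m := Int.emod_lt_of_pos k hmpos
  have hdm : k % m + m * (k / m) = k := Int.emod_add_mul_ediv k m
  have hcast : (((k % m).toNat : ℤ)) = k % m := Int.toNat_of_nonneg hr0
  have e : j = ((((k % m).toNat : ℤ)) + 1) + (m : ℤ) * (k / m) := by
    rw [hcast]; omega
  have hper := zper hl.2.2 (k / m) ((((k % m).toNat : ℤ)) + 1)
  show (p : ℤ) * (k / m) + S m (toV m l) ((k % m).toNat) = l j
  rw [hS ((k % m).toNat) (by omega)]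
  calc (p : ℤ) * (k / m) + l ((((k % m).toNat : ℤ)) + 1)
      = l (((((k % m).toNat : ℤ)) + 1) + (m : ℤ) * (k / m)) := by rw [hper]; ring
    _ = l j := by rw [← e]

lemma card_piAntidiag (m p : ℕ) :
    (Finset.piAntidiag (Finset.univ : Finset (Fin m)) p).card = (p + m - 1).choose p := by
  rw [← Finset.map_sym_eq_piAntidiag, Finset.card_map, Finset.sym_univ, Finset.card_univ,
    Sym.card_sym_eq_choose, Fintype.card_fin, show m + p - 1 = p + m - 1 from by omega]

lemma card_tuples (m p : ℕ) :
    Nat.card {v : Fin m → ℕ // ∑ i, v i = p} = (p + m - 1).choose p := by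
  have h1 : Nat.card {v : Fin m → ℕ // ∑ i, v i = p}
      = Nat.card {v // v ∈ Finset.piAntidiag (Finset.univ : Finset (Fin m)) p} := by
    exact Nat.card_congr (Equiv.subtypeEquivRight fun f => by
      simp [Finset.mem_piAntidiag])
  rw [h1, Nat.card_eq_finsetCard, card_piAntidiag]

lemma card_lambda {m : ℕ} (p : ℕ) (hm : 0 < m) :
    Nat.card (Lambda m p) = (p + m - 1).choose (m - 1) := by
  have hbij : Function.Bijective (fun v : {v : Fin m → ℕ // ∑ i, v i = p} =>
      (⟨fromV m p v.1, fromV_mem v.1 hm v.2⟩ : Lambda m p)) := by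
    constructor
    · intro a b h
      have h' : fromV m p a.1 = fromV m p b.1 := congrArg Subtype.val h
      have : toV m (fromV m p a.1) = toV m (fromV m p b.1) := by rw [h']
      rw [toV_fromV a.1 hm a.2, toV_fromV b.1 hm b.2] at this
      exact Subtype.ext this
    · intro l
      exact ⟨⟨toV m l.1, toV_sum l.2⟩, Subtype.ext (fromV_toV hm l.2)⟩
  rw [← Nat.card_eq_of_bijective _ hbij, card_tuples]
  rw [← Nat.choose_symm (show p ≤ p + m - 1 by omega)]
  congr 1
  omega

lemma lambda_finite {m : ℕ} (p : ℕ) (hm : 0 < m) : (Lambda m p).Finite := by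
  have : Finite {v : Fin m → ℕ // ∑ i, v i = p} := by
    have : Finite {v // v ∈ Finset.piAntidiag (Finset.univ : Finset (Fin m)) p} :=
      inferInstance
    exact Finite.of_equiv _ (Equiv.subtypeEquivRight (fun f => by
      simp [Finset.mem_piAntidiag] : ∀ f : Fin m → ℕ,
        f ∈ Finset.piAntidiag (Finset.univ : Finset (Fin m)) p ↔ ∑ i, f i = p))
  have hsurj : Function.Surjective (fun v : {v : Fin m → ℕ // ∑ i, v i = p} =>
      (⟨fromV m p v.1, fromV_mem v.1 hm v.2⟩ : Lambda m p)) := fun l =>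
    ⟨⟨toV m l.1, toV_sum l.2⟩, Subtype.ext (fromV_toV hm l.2)⟩
  have : Finite (Lambda m p) := Finite.of_surjective _ hsurj
  exact Set.finite_coe_iff.mp this

lemma lambda_mul {q d : ℕ} {l : ℤ → ℤ} (hl : l ∈ Lambda q d) (c : ℕ) :
    l ∈ Lambda (q * c) (d * c) := by
  refine ⟨hl.1, hl.2.1, fun i => ?_⟩
  have := zper hl.2.2 (c : ℤ) i
  push_cast
  push_cast at this
  exact this

lemma lambda_anti {m p α β : ℕ} (hαβ : α ∣ β) (hβm : β ∣ m) (hβp : β ∣ p) :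
    Lambda (m / β) (p / β) ⊆ Lambda (m / α) (p / α) := by
  rcases Nat.eq_zero_or_pos β with rfl | hβ0
  · have hm0 : m = 0 := Nat.eq_zero_of_zero_dvd hβm
    have hp0 : p = 0 := Nat.eq_zero_of_zero_dvd hβp
    subst hm0; subst hp0
    simp only [Nat.zero_div]
    exact fun l hl => hl
  intro l hl
  have hα0 : 0 < α := Nat.pos_of_dvd_of_pos hαβ hβ0
  have e1 : m / α = (m / β) * (β / α) := by
    rw [Nat.div_mul_div_comm hβm hαβ, Nat.mul_comm m β, Nat.mul_div_mul_left _ _ hβ0]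
  have e2 : p / α = (p / β) * (β / α) := by
    rw [Nat.div_mul_div_comm hβp hαβ, Nat.mul_comm p β, Nat.mul_div_mul_left _ _ hβ0]
  rw [e1, e2]
  exact lambda_mul hl (β / α)

lemma gcd_div_div {m β₁ β₂ : ℕ} (hm : 0 < m) (h1 : β₁ ∣ m) (h2 : β₂ ∣ m) :
    Nat.gcd (m / β₁) (m / β₂) = m / Nat.lcm β₁ β₂ := by
  have hβ1 : 0 < β₁ := Nat.pos_of_dvd_of_pos h1 hm
  have hβ2 : 0 < β₂ := Nat.pos_of_dvd_of_pos h2 hm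
  have hL : Nat.lcm β₁ β₂ ∣ m := Nat.lcm_dvd h1 h2
  apply Nat.eq_of_mul_eq_mul_right (show 0 < β₁ * β₂ by positivity)
  have l1 : (m / β₁) * (β₁ * β₂) = m * β₂ := by
    rw [← mul_assoc, Nat.div_mul_cancel h1]
  have l2 : (m / β₂) * (β₁ * β₂) = m * β₁ := by
    rw [show β₁ * β₂ = β₂ * β₁ from Nat.mul_comm _ _, ← mul_assoc, Nat.div_mul_cancel h2]
  rw [← Nat.gcd_mul_right, l1, l2, Nat.gcd_mul_left, Nat.gcd_comm β₂ β₁]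
  rw [← Nat.gcd_mul_lcm β₁ β₂, show Nat.gcd β₁ β₂ * Nat.lcm β₁ β₂
      = Nat.lcm β₁ β₂ * Nat.gcd β₁ β₂ from Nat.mul_comm _ _, ← mul_assoc,
    Nat.div_mul_cancel hL]

lemma lambda_lcm {m p β₁ β₂ : ℕ} {l : ℤ → ℤ} (hm : 0 < m) (hp : 0 < p)
    (hβ₁m : β₁ ∣ m) (hβ₁p : β₁ ∣ p) (hβ₂m : β₂ ∣ m) (hβ₂p : β₂ ∣ p)
    (h1 : l ∈ Lambda (m / β₁) (p / β₁)) (h2 : l ∈ Lambda (m / β₂) (p / β₂)) :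
    l ∈ Lambda (m / Nat.lcm β₁ β₂) (p / Nat.lcm β₁ β₂) := by
  set L := Nat.lcm β₁ β₂ with hLdef
  have hLm : L ∣ m := Nat.lcm_dvd hβ₁m hβ₂m
  have hLp : L ∣ p := Nat.lcm_dvd hβ₁p hβ₂p
  set a := Nat.gcdA (m / β₁) (m / β₂) with ha
  set b := Nat.gcdB (m / β₁) (m / β₂) with hb
  have hBez : ((m / L : ℕ) : ℤ) = ((m / β₁ : ℕ) : ℤ) * a + ((m / β₂ : ℕ) : ℤ) * b := by
    rw [← gcd_div_div hm hβ₁m hβ₂m]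
    exact Nat.gcd_eq_gcd_ab (m / β₁) (m / β₂)
  have hmne : ((m : ℕ) : ℤ) ≠ 0 := by exact_mod_cast hm.ne'
  have cross : ∀ β : ℕ, β ∣ m → β ∣ p → ((m : ℕ) : ℤ) * ((p / β : ℕ) : ℤ)
      = ((p : ℕ) : ℤ) * ((m / β : ℕ) : ℤ) := by
    intro β hbm hbp
    have : m * (p / β) = p * (m / β) := by
      rw [← Nat.mul_div_assoc m hbp, ← Nat.mul_div_assoc p hbm, Nat.mul_comm m p]
    exact_mod_cast congrArg (Nat.cast : ℕ → ℤ) this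
  have hBez2 : ((p / L : ℕ) : ℤ) = ((p / β₁ : ℕ) : ℤ) * a + ((p / β₂ : ℕ) : ℤ) * b := by
    apply mul_left_cancel₀ hmne
    rw [mul_add, ← mul_assoc, ← mul_assoc, cross L hLm hLp, cross β₁ hβ₁m hβ₁p,
      cross β₂ hβ₂m hβ₂p]
    rw [hBez]
    ring
  refine ⟨h1.1, h1.2.1, fun i => ?_⟩
  rw [hBez, hBez2]
  exact per_comb h1.2.2 h2.2.2 a b i

open Finset in
lemma lambda_eq_biUnion {m p α : ℕ} (hm : 0 < m) (hp : 0 < p) (hα : α ∣ m.gcd p) :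
    Lambda (m / α) (p / α) = ⋃ β ∈ (m.gcd p).divisors.filter (α ∣ ·), LambdaExact m p β := by
  classical
  have hn0 : m.gcd p ≠ 0 := (Nat.gcd_pos_of_pos_left p hm).ne'
  ext l
  simp only [Set.mem_iUnion, exists_prop, Finset.mem_filter, Nat.mem_divisors]
  constructor
  · intro hl
    set n := m.gcd p with hn
    set T : Finset ℕ := n.divisors.filter (fun β => α ∣ β ∧ l ∈ Lambda (m / β) (p / β))
      with hT
    have hmemT : ∀ {β : ℕ}, β ∈ T ↔ (β ∣ n ∧ α ∣ β ∧ l ∈ Lambda (m / β) (p / β)) := by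
      intro β
      simp [hT, Nat.mem_divisors, hn0, and_assoc]
    have hαT : α ∈ T := hmemT.2 ⟨hα, dvd_refl α, hl⟩
    have hne : T.Nonempty := ⟨α, hαT⟩
    set B := T.max' hne with hB
    obtain ⟨hBn, hαB, hlB⟩ := hmemT.1 (T.max'_mem hne)
    have hB0 : 0 < B := Nat.pos_of_dvd_of_pos hBn (Nat.pos_of_ne_zero hn0)
    have hmax : ∀ γ ∈ T, γ ∣ B := by
      intro γ hγ
      obtain ⟨hγn, hαγ, hlγ⟩ := hmemT.1 hγ
      have hLT : Nat.lcm B γ ∈ T := hmemT.2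
        ⟨Nat.lcm_dvd hBn hγn, hαB.trans (Nat.dvd_lcm_left _ _),
          lambda_lcm hm hp (hBn.trans (Nat.gcd_dvd_left m p)) (hBn.trans (Nat.gcd_dvd_right m p))
            (hγn.trans (Nat.gcd_dvd_left m p)) (hγn.trans (Nat.gcd_dvd_right m p)) hlB hlγ⟩
      have h1 : Nat.lcm B γ ≤ B := T.le_max' _ hLT
      have h2 : B ∣ Nat.lcm B γ := Nat.dvd_lcm_left _ _
      have hlcm0 : 0 < Nat.lcm B γ :=
        Nat.pos_of_dvd_of_pos (Nat.lcm_dvd hBn hγn) (Nat.pos_of_ne_zero hn0)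
      have h3 : Nat.lcm B γ = B := le_antisymm h1 (Nat.le_of_dvd hlcm0 h2)
      exact h3 ▸ Nat.dvd_lcm_right _ _
    refine ⟨B, ⟨⟨hBn, hn0⟩, hαB⟩, hlB, ?_⟩
    intro α' hα'm hα'p hBα' hBlt hl'
    have hα'T : α' ∈ T := hmemT.2 ⟨Nat.dvd_gcd hα'm hα'p, hαB.trans hBα', hl'⟩
    have := Nat.le_of_dvd hB0 (hmax α' hα'T)
    omega
  · rintro ⟨β, ⟨⟨hβn, _⟩, hαβ⟩, hlβ⟩
    exact lambda_anti hαβ (hβn.trans (Nat.gcd_dvd_left m p)) (hβn.trans (Nat.gcd_dvd_right m p))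
      hlβ.1

lemma exact_disjoint {m p β₁ β₂ : ℕ} (hm : 0 < m) (hp : 0 < p)
    (h1 : β₁ ∣ m.gcd p) (h2 : β₂ ∣ m.gcd p) (hne : β₁ ≠ β₂) :
    Disjoint (LambdaExact m p β₁) (LambdaExact m p β₂) := by
  rw [Set.disjoint_left]
  intro l hl1 hl2
  set L := Nat.lcm β₁ β₂ with hL
  have hβ₁m : β₁ ∣ m := h1.trans (Nat.gcd_dvd_left m p)
  have hβ₁p : β₁ ∣ p := h1.trans (Nat.gcd_dvd_right m p)
  have hβ₂m : β₂ ∣ m := h2.trans (Nat.gcd_dvd_left m p)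
  have hβ₂p : β₂ ∣ p := h2.trans (Nat.gcd_dvd_right m p)
  have hLm : L ∣ m := Nat.lcm_dvd hβ₁m hβ₂m
  have hLp : L ∣ p := Nat.lcm_dvd hβ₁p hβ₂p
  have hlL : l ∈ Lambda (m / L) (p / L) :=
    lambda_lcm hm hp hβ₁m hβ₁p hβ₂m hβ₂p hl1.1 hl2.1
  have hL0 : 0 < L := Nat.pos_of_dvd_of_pos hLm hm
  have e1 : β₁ = L := by
    by_contra hne1
    have hlt : β₁ < L := Nat.lt_of_le_of_ne (Nat.le_of_dvd hL0 (Nat.dvd_lcm_left _ _)) hne1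
    exact hl1.2 L hLm hLp (Nat.dvd_lcm_left _ _) hlt hlL
  have e2 : β₂ = L := by
    by_contra hne2
    have hlt : β₂ < L := Nat.lt_of_le_of_ne (Nat.le_of_dvd hL0 (Nat.dvd_lcm_right _ _)) hne2
    exact hl2.2 L hLm hLp (Nat.dvd_lcm_right _ _) hlt hlL
  exact hne (e1.trans e2.symm)

lemma exact_finite {m p β : ℕ} (hm : 0 < m) (hβ : β ∣ m.gcd p) :
    (LambdaExact m p β).Finite := by
  have hβm : β ∣ m := hβ.trans (Nat.gcd_dvd_left m p)
  have : 0 < m / β := Nat.div_pos (Nat.le_of_dvd hm (hβm)) (Nat.pos_of_dvd_of_pos hβm hm)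
  exact (lambda_finite (p / β) this).subset fun l hl => hl.1

open Finset in
lemma ncard_biUnion {t : Finset ℕ} {f : ℕ → Set (ℤ → ℤ)}
    (hfin : ∀ i ∈ t, (f i).Finite)
    (hdisj : ∀ i ∈ t, ∀ j ∈ t, i ≠ j → Disjoint (f i) (f j)) :
    (⋃ i ∈ t, f i).ncard = ∑ i ∈ t, (f i).ncard := by
  classical
  induction t using Finset.induction_on with
  | empty => simp
  | @insert x s hx ih =>
    rw [Finset.sum_insert hx]
    have hbig : (⋃ i ∈ insert x s, f i) = f x ∪ ⋃ i ∈ s, f i := by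
      simp [Set.biUnion_insert]
    rw [hbig]
    have hfinU : (⋃ i ∈ s, f i).Finite :=
      Set.Finite.biUnion s.finite_toSet fun i hi => hfin i (Finset.mem_insert_of_mem hi)
    have hd : Disjoint (f x) (⋃ i ∈ s, f i) := by
      rw [Set.disjoint_iff_inter_eq_empty]
      ext y
      simp only [Set.mem_inter_iff, Set.mem_iUnion, exists_prop, Set.mem_empty_iff_false,
        iff_false, not_and]
      rintro hy ⟨i, hi, hyi⟩
      exact (hdisj x (Finset.mem_insert_self x s) i (Finset.mem_insert_of_mem hi)
        (fun h => hx (h ▸ hi))).le_bot ⟨hy, hyi⟩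
    rw [Set.ncard_union_eq hd (hfin x (Finset.mem_insert_self x s)) hfinU,
      ih (fun i hi => hfin i (Finset.mem_insert_of_mem hi))
        (fun i hi j hj => hdisj i (Finset.mem_insert_of_mem hi) j (Finset.mem_insert_of_mem hj))]

open Finset in
lemma sum_exact {m p α : ℕ} (hm : 0 < m) (hp : 0 < p) (hα : α ∣ m.gcd p) :
    ∑ β ∈ (m.gcd p).divisors.filter (α ∣ ·), Nat.card (LambdaExact m p β)
      = ((p + m) / α - 1).choose (m / α - 1) := by
  have hαm : α ∣ m := hα.trans (Nat.gcd_dvd_left m p)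
  have hαp : α ∣ p := hα.trans (Nat.gcd_dvd_right m p)
  have hα0 : 0 < α := Nat.pos_of_dvd_of_pos hαm hm
  have hmα : 0 < m / α := Nat.div_pos (Nat.le_of_dvd hm hαm) hα0
  have key := card_lambda (m := m / α) (p / α) hmα
  have hsplit : (p + m) / α = p / α + m / α := Nat.add_div_of_dvd_right hαp ▸ rfl
  rw [show (p + m) / α = p / α + m / α from by
      rw [Nat.add_div_of_dvd_right hαp]]
  rw [← key, Nat.card_coe_set_eq, lambda_eq_biUnion hm hp hα, ncard_biUnion]
  · exact Finset.sum_congr rfl fun β hβ => Nat.card_coe_set_eq _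
  · intro β hβ
    exact exact_finite hm (Nat.mem_divisors.1 (Finset.mem_filter.1 hβ).1).1
  · intro i hi j hj hij
    exact exact_disjoint hm hp (Nat.mem_divisors.1 (Finset.mem_filter.1 hi).1).1
      (Nat.mem_divisors.1 (Finset.mem_filter.1 hj).1).1 hij

end LambdaAux

open ArithmeticFunction in
lemma moebius_sum_divisors (k : ℕ) :
    ∑ d ∈ k.divisors, (moebius d : ℤ) = if k = 1 then 1 else 0 := by
  have h := congrArg (fun f : ArithmeticFunction ℤ => f k)
    ArithmeticFunction.moebius_mul_coe_zeta
  simpa only [ArithmeticFunction.coe_mul_zeta_apply, ArithmeticFunction.one_apply] using h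

open ArithmeticFunction in
lemma moebius_filter_sum {α γ : ℕ} (hα0 : 0 < α) (hαγ : α ∣ γ) (hγ0 : γ ≠ 0) :
    ∑ β ∈ γ.divisors.filter (α ∣ ·), (moebius (β / α) : ℤ)
      = if γ = α then 1 else 0 := by
  classical
  have hdivne : ∀ {x : ℕ}, α ∣ x → x ≠ 0 → x / α ≠ 0 := by
    intro x hd hx h
    have hc := Nat.div_mul_cancel hd
    rw [h, zero_mul] at hc
    exact hx hc.symm
  have key : ∑ β ∈ γ.divisors.filter (α ∣ ·), (moebius (β / α) : ℤ)
      = ∑ δ ∈ (γ / α).divisors, (moebius δ : ℤ) := by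
    refine Finset.sum_nbij' (i := fun β => β / α) (j := fun δ => α * δ) ?_ ?_ ?_ ?_ ?_
    · intro β hβ
      obtain ⟨⟨hβγ, -⟩, hαβ⟩ := by
        simpa [Nat.mem_divisors] using hβ
      rw [Nat.mem_divisors]
      refine ⟨?_, hdivne hαγ hγ0⟩
      obtain ⟨s, rfl⟩ := hαβ
      obtain ⟨t, ht⟩ := hβγ
      show α * s / α ∣ γ / α
      rw [Nat.mul_div_cancel_left _ hα0, ht, mul_assoc, Nat.mul_div_cancel_left _ hα0]
      exact Dvd.intro t rfl
    · intro δ hδ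
      obtain ⟨hδγ, -⟩ := Nat.mem_divisors.1 hδ
      simp only [Finset.mem_filter, Nat.mem_divisors]
      exact ⟨⟨(mul_dvd_mul_left α hδγ).trans (by rw [Nat.mul_div_cancel' hαγ]), hγ0⟩,
        Dvd.intro δ rfl⟩
    · intro β hβ
      obtain ⟨-, hαβ⟩ := Finset.mem_filter.1 hβ
      exact Nat.mul_div_cancel' hαβ
    · intro δ _
      exact Nat.mul_div_cancel_left _ hα0
    · intro β _
      rfl
  rw [key, moebius_sum_divisors]
  have : γ / α = 1 ↔ γ = α := by
    constructor
    · intro h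
      have hc := Nat.div_mul_cancel hαγ
      rw [h, one_mul] at hc
      exact hc.symm
    · rintro rfl
      exact Nat.div_self hα0
  by_cases h : γ = α
  · rw [if_pos (this.2 h), if_pos h]
  · rw [if_neg (fun hh => h (this.1 hh)), if_neg h]

open ArithmeticFunction in
/-- Möbius-inversion formula for `|Λ^(α)(m,p)|`. -/
theorem lambdaExact_card (m p α : ℕ) (hm : 0 < m) (hp : 0 < p)
    (hαm : α ∣ m) (hαp : α ∣ p) :
    (Nat.card (LambdaExact m p α) : ℤ) =
      ∑ β ∈ (Nat.gcd m p).divisors.filter (α ∣ ·),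
        (moebius (β / α) : ℤ) * Nat.choose ((p + m) / β - 1) (m / β - 1) := by
  classical
  have hα : α ∣ Nat.gcd m p := Nat.dvd_gcd hαm hαp
  have hn0 : Nat.gcd m p ≠ 0 := (Nat.gcd_pos_of_pos_left p hm).ne'
  have hα0 : 0 < α := Nat.pos_of_dvd_of_pos hαm hm
  have hF : ∀ β ∈ (Nat.gcd m p).divisors.filter (α ∣ ·),
      ((((p + m) / β - 1).choose (m / β - 1) : ℕ) : ℤ)
        = ∑ γ ∈ (Nat.gcd m p).divisors.filter (β ∣ ·), (Nat.card (LambdaExact m p γ) : ℤ) := by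
    intro β hβ
    obtain ⟨hβn, -⟩ := Nat.mem_divisors.1 (Finset.mem_filter.1 hβ).1
    rw [← LambdaAux.sum_exact hm hp hβn]
    push_cast
    rfl
  symm
  calc ∑ β ∈ (Nat.gcd m p).divisors.filter (α ∣ ·),
        (moebius (β / α) : ℤ) * (Nat.choose ((p + m) / β - 1) (m / β - 1) : ℤ)
      = ∑ β ∈ (Nat.gcd m p).divisors.filter (α ∣ ·),
          ∑ γ ∈ (Nat.gcd m p).divisors.filter (β ∣ ·),
            (moebius (β / α) : ℤ) * (Nat.card (LambdaExact m p γ) : ℤ) := by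
        refine Finset.sum_congr rfl fun β hβ => ?_
        rw [hF β hβ, Finset.mul_sum]
    _ = ∑ γ ∈ (Nat.gcd m p).divisors.filter (α ∣ ·),
          ∑ β ∈ γ.divisors.filter (α ∣ ·),
            (moebius (β / α) : ℤ) * (Nat.card (LambdaExact m p γ) : ℤ) := by
        refine Finset.sum_comm' ?_
        intro β γ
        simp only [Finset.mem_filter, Nat.mem_divisors]
        constructor
        · rintro ⟨⟨⟨hβn, -⟩, hαβ⟩, ⟨hγn, -⟩, hβγ⟩
          have hγ0 : γ ≠ 0 := fun h => hn0 (by rw [h] at hγn; exact Nat.eq_zero_of_zero_dvd hγn)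
          exact ⟨⟨⟨hβγ, hγ0⟩, hαβ⟩, ⟨hγn, hn0⟩, hαβ.trans hβγ⟩
        · rintro ⟨⟨⟨hβγ, hγ0⟩, hαβ⟩, ⟨hγn, -⟩, hαγ⟩
          exact ⟨⟨⟨hβγ.trans hγn, hn0⟩, hαβ⟩, ⟨hγn, hn0⟩, hβγ⟩
    _ = ∑ γ ∈ (Nat.gcd m p).divisors.filter (α ∣ ·),
          (if γ = α then 1 else 0) * (Nat.card (LambdaExact m p γ) : ℤ) := by
        refine Finset.sum_congr rfl fun γ hγ => ?_
        obtain ⟨hγn', hαγ⟩ := Finset.mem_filter.1 hγ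
        obtain ⟨hγn, -⟩ := Nat.mem_divisors.1 hγn'
        have hγ0 : γ ≠ 0 := fun h => hn0 (by rw [h] at hγn; exact Nat.eq_zero_of_zero_dvd hγn)
        rw [← Finset.sum_mul, moebius_filter_sum hα0 hαγ hγ0]
    _ = (Nat.card (LambdaExact m p α) : ℤ) := by
        rw [Finset.sum_eq_single_of_mem α (by
          simp only [Finset.mem_filter, Nat.mem_divisors]
          exact ⟨⟨hα, hn0⟩, dvd_refl α⟩)]
        · rw [if_pos rfl, one_mul]
        · intro γ _ hne
          rw [if_neg hne, zero_mul]
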